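/- For the quantum algebra IV^ℏ with structure constants μ̂₁₂¹ = Â₋/√(2p₀), μ̂₁₂² = −Â₊/√(2p₀), μ̂₁₂³ = 1, μ̂₂₃³ = −Â₋/√(2p₀), μ̂₃₁³ = Â₊/√(2p₀) (others zero), the quantum Jacobian of (e₁,e₂,e₃) equals (0, 0, (1/p₀)[Â₊,Â₋]). -/
import Mathlib


/-- Antisymmetric bracket on the rank-3 free module over an ℝ-algebra `A`,
defined by structure constants `m i j k ∈ A`. -/
noncomputable def qbkt {A : Type*} [Ring A] [Algebra ℝ A]
    (m : Fin 3 → Fin 3 → Fin 3 → A) (x y : Fin 3 → A) : Fin 3 → A :=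
  fun k => ∑ i : Fin 3, ∑ j : Fin 3, x i * y j * m i j k

/-- The quantum Jacobian `Ĵ(x,y,z) = [[x,y],z] + [[y,z],x] + [[z,x],y]`. -/
noncomputable def qjac {A : Type*} [Ring A] [Algebra ℝ A]
    (m : Fin 3 → Fin 3 → Fin 3 → A) (x y z : Fin 3 → A) : Fin 3 → A :=
  qbkt m (qbkt m x y) z + qbkt m (qbkt m y z) x + qbkt m (qbkt m z x) y

/-- Structure constants of the quantum algebra IV^ℏ:
`μ̂₁₂¹ = Â₋/√(2p₀)`, `μ̂₁₂² = −Â₊/√(2p₀)`, `μ̂₁₂³ = 1`, `μ̂₂₃³ = −Â₋/√(2p₀)`,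
`μ̂₃₁³ = Â₊/√(2p₀)`. -/
noncomputable def muIVh {A : Type*} [Ring A] [Algebra ℝ A]
    (Ap Am : A) (p₀ : ℝ) : Fin 3 → Fin 3 → Fin 3 → A :=
  ![![![0, 0, 0], ![(Real.sqrt (2 * p₀))⁻¹ • Am, -((Real.sqrt (2 * p₀))⁻¹ • Ap), 1],
      ![0, 0, -((Real.sqrt (2 * p₀))⁻¹ • Ap)]],
    ![![-((Real.sqrt (2 * p₀))⁻¹ • Am), (Real.sqrt (2 * p₀))⁻¹ • Ap, -1], ![0, 0, 0],
      ![0, 0, -((Real.sqrt (2 * p₀))⁻¹ • Am)]],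
    ![![0, 0, (Real.sqrt (2 * p₀))⁻¹ • Ap], ![0, 0, (Real.sqrt (2 * p₀))⁻¹ • Am],
      ![0, 0, 0]]]

/-- For IV^ℏ, the quantum Jacobian of `(e₁,e₂,e₃)` equals `(0, 0, (1/p₀)[Â₊,Â₋])`. -/
theorem IVh_jacobian {A : Type*} [Ring A] [Algebra ℝ A]
    (Ap Am : A) (p₀ : ℝ) (hp₀ : 0 < p₀) :
    qjac (muIVh Ap Am p₀)
        (fun l => if l = 0 then 1 else 0)
        (fun l => if l = 1 then 1 else 0)
        (fun l => if l = 2 then 1 else 0)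
      = ![0, 0, p₀⁻¹ • (Ap * Am - Am * Ap)] := by
  have hs : (Real.sqrt (2 * p₀))⁻¹ * (Real.sqrt (2 * p₀))⁻¹ = (2 * p₀)⁻¹ := by
    rw [← mul_inv, Real.mul_self_sqrt (by positivity)]
  have hp : (2 * p₀)⁻¹ + (2 * p₀)⁻¹ = p₀⁻¹ := by
    rw [← two_mul, mul_inv, ← mul_assoc, mul_inv_cancel₀ two_ne_zero, one_mul]
  unfold muIVh
  set s := Real.sqrt (2 * p₀) with hsdef
  clear_value s
  funext k
  fin_cases k <;>
    simp [qjac, qbkt, Fin.sum_univ_three, hp, smul_smul, hs, mul_comm, smul_sub,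
      mul_add, add_mul, sub_eq_iff_eq_add] <;>
    module
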